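/- For every integer n ≥ 2, the identity ∑_{k=1}^{n-1} C(n,k) · k^{k-1} · (n-k)^{n-k-1} = 2(n-1) · n^{n-2} holds, where C(n,k) is the binomial coefficient. -/

import Mathlib

open Finset

/-- Auxiliary sum: `F m y = ∑_{k=1}^m C(m,k) k^{k-1} (y + (m-k))^{m-k}`. -/
def treeF (m y : ℕ) : ℕ :=
  ∑ k ∈ Finset.Icc 1 m, m.choose k * k ^ (k - 1) * (y + (m - k)) ^ (m - k)

lemma sub_one_mul_choose {n k : ℕ} (hn : 1 ≤ n) (hk : k ≤ n - 1) :
    n.choose k * (n - k) = n * (n-1).choose k := by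
  obtain ⟨m, rfl⟩ : ∃ m, n = m + 1 := ⟨n - 1, by omega⟩
  rw [← Nat.choose_succ_right_eq]
  simp only [Nat.add_sub_cancel]
  rw [Nat.add_one_mul_choose_eq]

lemma choose_mul_choose_symm {n k j : ℕ} (h : k + j ≤ n) :
    n.choose k * (n - k).choose j = n.choose j * (n - j).choose k := by
  have h1 := Nat.choose_mul (n := n) (show k ≤ k + j by omega)
  have h2 := Nat.choose_mul (n := n) (show j ≤ k + j by omega)
  rw [Nat.add_sub_cancel_left] at h1
  rw [Nat.add_sub_cancel] at h2
  have h3 : (k+j).choose k = (k+j).choose j := by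
    rw [← Nat.choose_symm (by omega : j ≤ k+j)]; congr 1; omega
  rw [← h1, ← h2, h3]

lemma treeF_eq (m : ℕ) : ∀ y, treeF m y = m * (y + m) ^ (m - 1) := by
  induction m using Nat.strong_induction_on with
  | _ n ih =>
    intro y
    match n, ih with
    | 0, _ => simp [treeF]
    | 1, _ => simp [treeF]
    | (m+2), ih =>
      set n := m + 2 with hn
      have hn2 : 2 ≤ n := by omega
      -- Step A : treeF n 0 = n ^ n
      have hA : treeF n 0 = n ^ n := by
        have hsplit : treeF n 0
            = (∑ k ∈ Icc 1 (m+1), n.choose k * k ^ (k-1) * (0 + (n-k)) ^ (n-k)) + n^(n-1) := by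
          rw [treeF, show Icc 1 n = Icc 1 ((m+1)+1) from rfl,
            Finset.sum_Icc_succ_top (by omega : 1 ≤ m+2)]
          congr 1
          simp [hn]
        have hterm : ∀ k ∈ Icc 1 (m+1), n.choose k * k^(k-1) * (0 + (n-k))^(n-k)
            = n * ((m+1).choose k * k^(k-1) * (1 + ((m+1) - k))^((m+1)-k)) := by
          intro k hk
          simp only [mem_Icc] at hk
          have h1 : (0 + (n-k))^(n-k) = (n-k) * (1 + ((m+1)-k))^((m+1)-k) := by
            have e : n - k = ((m+1)-k) + 1 := by omega
            rw [zero_add, e, pow_succ]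
            ring
          rw [h1, show n.choose k * k^(k-1) * ((n-k) * (1 + ((m+1)-k))^((m+1)-k))
              = (n.choose k * (n-k)) * (k^(k-1) * (1 + ((m+1)-k))^((m+1)-k)) by ring,
            sub_one_mul_choose (by omega) (by omega : k ≤ n - 1),
            show n - 1 = m + 1 from rfl]
          ring
        rw [hsplit, Finset.sum_congr rfl hterm, ← Finset.mul_sum]
        have hIH := ih (m+1) (by omega) 1
        rw [treeF] at hIH
        rw [hIH]
        have e1 : (1 + (m+1)) = n := by omega
        rw [e1]
        have e2 : n ^ (m+1-1) = n ^ m := by congr 1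
        rw [e2, show n - 1 = m + 1 from rfl]
        calc n * ((m+1) * n ^ m) + n ^ (m+1) = ((m+1) + 1) * (n ^ m * n) := by ring
        _ = n ^ n := by rw [← pow_succ]; rw [show n = m + 2 from rfl]; ring
      -- Step B
      have hexp : ∀ k ∈ Icc 1 n, n.choose k * k^(k-1) * (y + (n-k))^(n-k)
          = ∑ j ∈ range n, n.choose k * k^(k-1) * (y^j * (n-k)^((n-k)-j) * (n-k).choose j) := by
        intro k hk
        simp only [mem_Icc] at hk
        rw [add_pow y ((n-k : ℕ) : ℕ) (n-k), Finset.mul_sum]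
        push_cast [Nat.cast_id]
        apply Finset.sum_subset
        · intro j hj
          simp only [mem_range] at *
          omega
        · intro j hjn hjnot
          simp only [mem_range] at *
          have : (n-k).choose j = 0 := Nat.choose_eq_zero_of_lt (by omega)
          simp [this]
      calc treeF n y = ∑ k ∈ Icc 1 n, ∑ j ∈ range n,
            n.choose k * k^(k-1) * (y^j * (n-k)^((n-k)-j) * (n-k).choose j) :=
          Finset.sum_congr rfl hexp
        _ = ∑ j ∈ range n, ∑ k ∈ Icc 1 n,
            n.choose k * k^(k-1) * (y^j * (n-k)^((n-k)-j) * (n-k).choose j) :=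
          Finset.sum_comm
        _ = ∑ j ∈ range n, y^j * (n.choose j * ((n-j) * n^((n-1)-j))) := by
          refine Finset.sum_congr rfl ?_
          intro j hj
          simp only [mem_range] at hj
          have hres : ∑ k ∈ Icc 1 n,
              n.choose k * k^(k-1) * (y^j * (n-k)^((n-k)-j) * (n-k).choose j)
              = ∑ k ∈ Icc 1 (n-j),
              n.choose k * k^(k-1) * (y^j * (n-k)^((n-k)-j) * (n-k).choose j) := by
            symm
            apply Finset.sum_subset
            · exact Finset.Icc_subset_Icc le_rfl (by omega)
            · intro k hk hknot
              simp only [mem_Icc] at *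
              have : (n-k).choose j = 0 := Nat.choose_eq_zero_of_lt (by omega)
              simp [this]
          rw [hres]
          have hterm2 : ∀ k ∈ Icc 1 (n-j),
              n.choose k * k^(k-1) * (y^j * (n-k)^((n-k)-j) * (n-k).choose j)
              = y^j * (n.choose j * ((n-j).choose k * k^(k-1) * (j + ((n-j)-k))^((n-j)-k))) := by
            intro k hk
            simp only [mem_Icc] at hk
            have hkj : k + j ≤ n := by omega
            have e1 : (n-k) = j + ((n-j)-k) := by omega
            have e2 : (n-k)-j = (n-j)-k := by omega
            calc n.choose k * k^(k-1) * (y^j * (n-k)^((n-k)-j) * (n-k).choose j)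
                = y^j * ((n.choose k * (n-k).choose j) * (k^(k-1) * (n-k)^((n-k)-j))) := by ring
              _ = y^j * ((n.choose j * (n-j).choose k) * (k^(k-1) * (j + ((n-j)-k))^((n-j)-k))) := by
                  rw [choose_mul_choose_symm hkj, ← e1, ← e2]
              _ = y^j * (n.choose j * ((n-j).choose k * k^(k-1) * (j + ((n-j)-k))^((n-j)-k))) := by
                  ring
          rw [Finset.sum_congr rfl hterm2, ← Finset.mul_sum, ← Finset.mul_sum, ← treeF]
          rcases Nat.eq_zero_or_pos j with rfl | hj1
          · simp only [Nat.sub_zero, Nat.choose_zero_right, pow_zero, one_mul]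
            rw [hA]
            rw [show n - 1 = m + 1 from rfl]
            rw [show n ^ n = n ^ (m+1) * n from pow_succ n (m+1)]
            ring
          · rw [ih (n-j) (by omega) j, show j + (n-j) = n by omega,
              show (n-j)-1 = (n-1)-j by omega]
        _ = ∑ j ∈ range n, n * (y^j * n^((n-1)-j) * (n-1).choose j) := by
          refine Finset.sum_congr rfl ?_
          intro j hj
          simp only [mem_range] at hj
          rw [show y^j * (n.choose j * ((n-j) * n^((n-1)-j)))
              = (n.choose j * (n-j)) * (y^j * n^((n-1)-j)) by ring,
            sub_one_mul_choose (by omega) (by omega : j ≤ n-1)]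
          ring
        _ = n * (y + n) ^ (n-1) := by
          rw [← Finset.mul_sum, show range n = range ((n-1)+1) by congr 1,
            add_pow y (n : ℕ) (n-1)]
          push_cast [Nat.cast_id]
          rfl

theorem tree_identity (n : ℕ) (hn : 2 ≤ n) :
    ∑ k ∈ Finset.Ico 1 n, n.choose k * k ^ (k - 1) * (n - k) ^ (n - k - 1)
      = 2 * (n - 1) * n ^ (n - 2) := by
  have hkey : ∑ k ∈ Ico 1 n, n.choose k * k ^ (k-1) * (n-k) ^ (n-k)
      = (n-1) * n ^ (n-1) := by
    have h2 := treeF_eq n 0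
    rw [treeF, ← Finset.Ico_add_one_right_eq_Icc, Finset.sum_Ico_succ_top (by omega : 1 ≤ n)] at h2
    simp only [Nat.choose_self, Nat.sub_self, zero_add, pow_zero, mul_one, one_mul] at h2
    have e : n * n ^ (n-1) = (n-1) * n ^ (n-1) + n ^ (n-1) := by
      set A := n ^ (n-1) with hA
      conv_lhs => rw [show n = (n-1)+1 by omega]
      rw [add_mul, one_mul]
    exact Nat.add_right_cancel (h2.trans e)
  have hA : ∑ k ∈ Ico 1 n, (n-k) * (n.choose k * k ^ (k-1) * (n-k) ^ (n-k-1))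
      = (n-1) * n ^ (n-1) := by
    rw [← hkey]
    refine Finset.sum_congr rfl ?_
    intro k hk
    simp only [mem_Ico] at hk
    rw [show (n-k) ^ (n-k) = (n-k) ^ (n-k-1) * (n-k) from by rw [← pow_succ]; congr 1; omega]
    ring
  have hB : ∑ k ∈ Ico 1 n, k * (n.choose k * k ^ (k-1) * (n-k) ^ (n-k-1))
      = ∑ k ∈ Ico 1 n, (n-k) * (n.choose k * k ^ (k-1) * (n-k) ^ (n-k-1)) := by
    refine Finset.sum_nbij' (i := fun k => n - k) (j := fun k => n - k) ?_ ?_ ?_ ?_ ?_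
    · intro k hk; simp only [mem_Ico] at *; omega
    · intro k hk; simp only [mem_Ico] at *; omega
    · intro k hk; simp only [mem_Ico] at *; omega
    · intro k hk; simp only [mem_Ico] at *; omega
    · intro k hk
      simp only [mem_Ico] at hk
      rw [show n - (n - k) = k by omega, Nat.choose_symm (by omega : k ≤ n)]
      ring
  have hmul : n * (∑ k ∈ Ico 1 n, n.choose k * k ^ (k-1) * (n-k) ^ (n-k-1))
      = n * (2 * (n-1) * n ^ (n-2)) := by
    rw [Finset.mul_sum]
    have hsplit : ∀ k ∈ Ico 1 n, n * (n.choose k * k ^ (k-1) * (n-k) ^ (n-k-1))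
        = k * (n.choose k * k ^ (k-1) * (n-k) ^ (n-k-1))
          + (n-k) * (n.choose k * k ^ (k-1) * (n-k) ^ (n-k-1)) := by
      intro k hk
      simp only [mem_Ico] at hk
      rw [← add_mul]
      congr 1
      omega
    rw [Finset.sum_congr rfl hsplit, Finset.sum_add_distrib, hB, hA,
      show n ^ (n-1) = n ^ (n-2) * n from by rw [← pow_succ]; congr 1; omega]
    ring
  exact Nat.eq_of_mul_eq_mul_left (by omega) hmul
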